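/- The correlated equilibrium polytope of the Bach or Stravinsky game, namely the set of points (p_{00}, p_{01}, p_{10}, p_{11}) in the 3-simplex satisfying 3p_{00} - 2p_{01} ≥ 0, 2p_{11} - 3p_{10} ≥ 0, 2p_{00} - 3p_{10} ≥ 0, and 3p_{11} - 2p_{01} ≥ 0, equals the convex hull of the five points (1,0,0,0), (0,0,0,1), (2/7,3/7,0,2/7), (3/8,0,1/4,3/8), and (6/25,9/25,4/25,6/25). -/

import Mathlib

set_option maxHeartbeats 2000000 in
/-- The correlated equilibrium polytope of the Bach or Stravinsky game equals the convex
hull of its five vertices. Coordinates are ordered (p₀₀, p₀₁, p₁₀, p₁₁). -/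
theorem stmt19 :
    {v : Fin 4 → ℝ | (∀ i, 0 ≤ v i) ∧ v 0 + v 1 + v 2 + v 3 = 1 ∧
      3 * v 0 - 2 * v 1 ≥ 0 ∧ 2 * v 3 - 3 * v 2 ≥ 0 ∧
      2 * v 0 - 3 * v 2 ≥ 0 ∧ 3 * v 3 - 2 * v 1 ≥ 0} =
    convexHull ℝ
      {![1, 0, 0, 0], ![0, 0, 0, 1], ![2/7, 3/7, 0, 2/7], ![3/8, 0, 1/4, 3/8],
       (![6/25, 9/25, 4/25, 6/25] : Fin 4 → ℝ)} := by
  apply Set.Subset.antisymm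
  · rintro v ⟨hpos, hsum, h1, h2, h3, h4⟩
    have hp1 := hpos 1
    have hp2 := hpos 2
    set E : ℝ := max 0 ((25/6) * ((2/3) * v 1 + (3/2) * v 2 - min (v 0) (v 3))) with hE
    have hE0 : 0 ≤ E := le_max_left _ _
    have hE1 : E ≤ (25/9) * v 1 := by
      apply max_le
      · linarith
      · rcases le_total (v 0) (v 3) with h | h
        · rw [min_eq_left h]; linarith
        · rw [min_eq_right h]; linarith
    have hE2 : E ≤ (25/4) * v 2 := by
      apply max_le
      · linarith
      · rcases le_total (v 0) (v 3) with h | h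
        · rw [min_eq_left h]; linarith
        · rw [min_eq_right h]; linarith
    have hEm : (2/3) * v 1 + (3/2) * v 2 - (6/25) * E ≤ min (v 0) (v 3) := by
      have := le_max_right 0 ((25/6) * ((2/3) * v 1 + (3/2) * v 2 - min (v 0) (v 3)))
      linarith
    have hm0 : min (v 0) (v 3) ≤ v 0 := min_le_left _ _
    have hm3 : min (v 0) (v 3) ≤ v 3 := min_le_right _ _
    set A : ℝ := v 0 - ((2/3) * v 1 + (3/2) * v 2 - (6/25) * E) with hA
    set B : ℝ := v 3 - ((2/3) * v 1 + (3/2) * v 2 - (6/25) * E) with hB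
    set C : ℝ := (7/3) * (v 1 - (9/25) * E) with hC
    set D : ℝ := 4 * (v 2 - (4/25) * E) with hD
    have hv : v = ∑ i : Fin 5,
        (![A, B, C, D, E] i) •
          (![![1, 0, 0, 0], ![0, 0, 0, 1], ![2/7, 3/7, 0, 2/7], ![3/8, 0, 1/4, 3/8],
             (![6/25, 9/25, 4/25, 6/25] : Fin 4 → ℝ)] i) := by
      funext j
      fin_cases j <;>
        simp [Fin.sum_univ_five, hA, hB, hC, hD] <;> ring
    rw [hv]
    apply (convex_convexHull ℝ _).sum_mem
    · intro i _
      fin_cases i <;> simp [hA, hB, hC, hD] <;> linarith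
    · rw [Fin.sum_univ_five]
      simp only [Matrix.cons_val_zero, Matrix.cons_val_one, Matrix.head_cons,
        Matrix.cons_val_two, Matrix.tail_cons, Matrix.cons_val_three, Matrix.cons_val_four]
      rw [hA, hB, hC, hD]
      linarith
    · intro i _
      apply subset_convexHull
      fin_cases i <;> simp
  · apply convexHull_min
    · rintro p hp
      simp only [Set.mem_insert_iff, Set.mem_singleton_iff] at hp
      rcases hp with rfl | rfl | rfl | rfl | rfl <;>
        exact ⟨fun i => by fin_cases i <;> norm_num, by norm_num [Matrix.cons_val_two, Matrix.cons_val_three], by norm_num [Matrix.cons_val_two, Matrix.cons_val_three], by norm_num [Matrix.cons_val_two, Matrix.cons_val_three],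
          by norm_num [Matrix.cons_val_two, Matrix.cons_val_three], by norm_num [Matrix.cons_val_two, Matrix.cons_val_three]⟩
    · intro x hx y hy a b ha hb hab
      obtain ⟨hxp, hxs, hx1, hx2, hx3, hx4⟩ := hx
      obtain ⟨hyp, hys, hy1, hy2, hy3, hy4⟩ := hy
      have e : ∀ i, (a • x + b • y) i = a * x i + b * y i := fun i => by
        simp [mul_comm]
      refine ⟨fun i => by rw [e]; exact add_nonneg (mul_nonneg ha (hxp i)) (mul_nonneg hb (hyp i)),
        ?_, ?_, ?_, ?_, ?_⟩ <;> simp only [e]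
      · nlinarith [hab]
      · nlinarith [mul_nonneg ha hx1, mul_nonneg hb hy1]
      · nlinarith [mul_nonneg ha hx2, mul_nonneg hb hy2]
      · nlinarith [mul_nonneg ha hx3, mul_nonneg hb hy3]
      · nlinarith [mul_nonneg ha hx4, mul_nonneg hb hy4]
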